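/- Let μ, μ′ be probability measures on a Polish metric space (X, d_X) with finite first moments, and let h: X → [0,∞) be bounded by C := sup h < ∞ and globally Lipschitz with constant L := ||h||_Lip < ∞. Suppose the diameter D := sup_{x,x′} d_X(x,x′) < ∞, and 0 < Z(μ) := ∫ h dμ < ∞, 0 < Z(μ′) := ∫ h dμ′ < ∞. Define posteriors Fμ(A) := (∫_A h dμ)/Z(μ) and similarly Fμ′. Then W₁(Fμ, Fμ′) ≤ ((2DL + C)/Z(μ)) · W₁(μ, μ′). -/

import Mathlib

open MeasureTheory
open scoped ENNReal

/-- The 1-Wasserstein distance, defined as the infimum over all couplings of the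
expected (extended) distance. -/
noncomputable def W1 {X : Type*} [MeasurableSpace X] [PseudoEMetricSpace X]
    (μ μ' : Measure X) : ℝ≥0∞ :=
  ⨅ γ ∈ {γ : Measure (X × X) | γ.map Prod.fst = μ ∧ γ.map Prod.snd = μ'},
    ∫⁻ p, edist p.1 p.2 ∂γ

/-- Global Lipschitz stability of the Bayesian posterior under the 1-Wasserstein
distance on a bounded Polish metric space:
`W₁(Fμ, Fμ') ≤ ((2DL + C)/Z(μ)) · W₁(μ, μ')`, where the posterior `Fμ` has density
`h/Z(μ)` with respect to the prior `μ`, the likelihood `h` is bounded by `C` and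
`L`-Lipschitz, and `D` bounds the diameter of the space. -/
theorem stmt2 {X : Type*} [MetricSpace X] [PolishSpace X] [MeasurableSpace X] [BorelSpace X]
    (μ μ' : Measure X) [IsProbabilityMeasure μ] [IsProbabilityMeasure μ']
    (h : X → ℝ) (C L D Z Z' : ℝ)
    (hhm : Measurable h) (hh0 : ∀ x, 0 ≤ h x)
    (hC : ∀ x, h x ≤ C) (hL0 : 0 ≤ L) (hL : LipschitzWith (Real.toNNReal L) h)
    (hD : ∀ x y : X, dist x y ≤ D)
    (hmom : ∀ x₀ : X, Integrable (fun x => dist x x₀) μ)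
    (hmom' : ∀ x₀ : X, Integrable (fun x => dist x x₀) μ')
    (hZ : Z = ∫ x, h x ∂μ) (hZ' : Z' = ∫ x, h x ∂μ')
    (hZpos : 0 < Z) (hZ'pos : 0 < Z') :
    W1 ((ENNReal.ofReal Z)⁻¹ • μ.withDensity (fun x => ENNReal.ofReal (h x)))
       ((ENNReal.ofReal Z')⁻¹ • μ'.withDensity (fun x => ENNReal.ofReal (h x)))
      ≤ ENNReal.ofReal ((2 * D * L + C) / Z) * W1 μ μ' := by
  classical
  have hXne : Nonempty X := by
    by_contra hX
    haveI : IsEmpty X := not_nonempty_iff.mp hX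
    have h1 : μ Set.univ = 1 := measure_univ
    rw [Measure.eq_zero_of_isEmpty μ] at h1
    simp at h1
  obtain ⟨x₀⟩ := hXne
  have hD0 : 0 ≤ D := le_trans dist_nonneg (hD x₀ x₀)
  have hC0 : 0 ≤ C := le_trans (hh0 x₀) (hC x₀)
  have hint : Integrable h μ := by
    refine Integrable.mono' (integrable_const C) hhm.aestronglyMeasurable ?_
    filter_upwards with x
    rw [Real.norm_eq_abs, abs_of_nonneg (hh0 x)]
    exact hC x
  have hint' : Integrable h μ' := by
    refine Integrable.mono' (integrable_const C) hhm.aestronglyMeasurable ?_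
    filter_upwards with x
    rw [Real.norm_eq_abs, abs_of_nonneg (hh0 x)]
    exact hC x
  have hZC : Z ≤ C := by
    rw [hZ]
    calc ∫ x, h x ∂μ ≤ ∫ _x, C ∂μ := integral_mono hint (integrable_const C) hC
      _ = C := by simp
  have hCpos : 0 < C := lt_of_lt_of_le hZpos hZC
  set Ze := ENNReal.ofReal Z with hZedef
  set Z'e := ENNReal.ofReal Z' with hZ'edef
  have hZe0 : Ze ≠ 0 := (ENNReal.ofReal_pos.mpr hZpos).ne'
  have hZetop : Ze ≠ ⊤ := ENNReal.ofReal_ne_top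
  have hZ'e0 : Z'e ≠ 0 := (ENNReal.ofReal_pos.mpr hZ'pos).ne'
  have hZ'etop : Z'e ≠ ⊤ := ENNReal.ofReal_ne_top
  set Zi := Ze⁻¹ with hZidef
  set Z'i := Z'e⁻¹ with hZ'idef
  have hZitop : Zi ≠ ⊤ := ENNReal.inv_ne_top.mpr hZe0
  have hZiofReal : Zi = ENNReal.ofReal Z⁻¹ := by
    rw [hZidef, hZedef, ENNReal.ofReal_inv_of_pos hZpos]
  have hZ'iofReal : Z'i = ENNReal.ofReal Z'⁻¹ := by
    rw [hZ'idef, hZ'edef, ENNReal.ofReal_inv_of_pos hZ'pos]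
  set g : X → ℝ≥0∞ := fun x => ENNReal.ofReal (h x) with hgdef
  have hgm : Measurable g := ENNReal.measurable_ofReal.comp hhm
  have hgtop : ∀ x, g x ≠ ⊤ := fun x => ENNReal.ofReal_ne_top
  set F := Zi • μ.withDensity g with hFdef
  set F' := Z'i • μ'.withDensity g with hF'def
  have hZeint : ∫⁻ x, g x ∂μ = Ze := by
    rw [hZedef, hZ, ofReal_integral_eq_lintegral_ofReal hint (ae_of_all _ hh0)]
  have hZ'eint : ∫⁻ x, g x ∂μ' = Z'e := by
    rw [hZ'edef, hZ', ofReal_integral_eq_lintegral_ofReal hint' (ae_of_all _ hh0)]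
  have hFuniv : F Set.univ = 1 := by
    rw [hFdef, Measure.smul_apply, smul_eq_mul, withDensity_apply g MeasurableSet.univ,
      setLIntegral_univ, hZeint]
    exact ENNReal.inv_mul_cancel hZe0 hZetop
  have hF'univ : F' Set.univ = 1 := by
    rw [hF'def, Measure.smul_apply, smul_eq_mul, withDensity_apply g MeasurableSet.univ,
      setLIntegral_univ, hZ'eint]
    exact ENNReal.inv_mul_cancel hZ'e0 hZ'etop
  haveI hFfin : IsFiniteMeasure F := ⟨by rw [hFuniv]; exact ENNReal.one_lt_top⟩
  haveI hF'fin : IsFiniteMeasure F' := ⟨by rw [hF'univ]; exact ENNReal.one_lt_top⟩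
  set K := ENNReal.ofReal ((2 * D * L + C) / Z) with hKdef
  have hDL0 : (0:ℝ) ≤ 2 * D * L := mul_nonneg (mul_nonneg (by norm_num) hD0) hL0
  have hKpos : 0 < (2 * D * L + C) / Z :=
    div_pos (add_pos_of_nonneg_of_pos hDL0 hCpos) hZpos
  have hK0 : K ≠ 0 := (ENNReal.ofReal_pos.mpr hKpos).ne'
  have hKtop : K ≠ ⊤ := ENNReal.ofReal_ne_top
  have hKeq : ENNReal.ofReal C * Zi + ENNReal.ofReal D * (2 * (ENNReal.ofReal L * Zi)) = K := by
    rw [hKdef, hZiofReal, ← ENNReal.ofReal_mul hC0, ← ENNReal.ofReal_mul hL0,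
      show (2:ℝ≥0∞) = ENNReal.ofReal 2 from (ENNReal.ofReal_ofNat 2).symm,
      ← ENNReal.ofReal_mul (by norm_num : (0:ℝ) ≤ 2),
      ← ENNReal.ofReal_mul hD0,
      ← ENNReal.ofReal_add (mul_nonneg hC0 (inv_nonneg.mpr hZpos.le))
        (mul_nonneg hD0 (mul_nonneg (by norm_num) (mul_nonneg hL0 (inv_nonneg.mpr hZpos.le))))]
    congr 1
    field_simp
    ring
  -- pointwise Lipschitz bound in ℝ≥0∞
  have hlip : ∀ x y : X, g x - g y ≤ ENNReal.ofReal L * edist x y := by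
    intro x y
    have h1 : h x - h y ≤ L * dist x y := by
      have h2 := hL.dist_le_mul x y
      rw [Real.dist_eq, Real.coe_toNNReal L hL0] at h2
      exact le_trans (le_abs_self _) h2
    simp only [hgdef]
    rw [← ENNReal.ofReal_sub _ (hh0 y), edist_dist, ← ENNReal.ofReal_mul hL0]
    exact ENNReal.ofReal_le_ofReal h1
  -- key: bound against any coupling
  have key : ∀ γ : Measure (X × X), γ.map Prod.fst = μ → γ.map Prod.snd = μ' →
      W1 F F' ≤ K * ∫⁻ p, edist p.1 p.2 ∂γ := by
    intro γ hγf hγs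
    haveI hγprob : IsProbabilityMeasure γ := by
      constructor
      have h1 : (γ.map Prod.fst) Set.univ = 1 := by rw [hγf]; exact measure_univ
      rwa [Measure.map_apply measurable_fst MeasurableSet.univ, Set.preimage_univ] at h1
    set cost := ∫⁻ p : X × X, edist p.1 p.2 ∂γ with hcostdef
    have hedm : Measurable fun p : X × X => edist p.1 p.2 := continuous_edist.measurable
    have hg1m : Measurable fun p : X × X => g p.1 := hgm.comp measurable_fst
    have hg2m : Measurable fun p : X × X => g p.2 := hgm.comp measurable_snd
    have hlf : ∀ f : X → ℝ≥0∞, Measurable f → ∫⁻ p : X × X, f p.1 ∂γ = ∫⁻ x, f x ∂μ := by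
      intro f hf; rw [← hγf, lintegral_map hf measurable_fst]
    have hls : ∀ f : X → ℝ≥0∞, Measurable f → ∫⁻ p : X × X, f p.2 ∂γ = ∫⁻ x, f x ∂μ' := by
      intro f hf; rw [← hγs, lintegral_map hf measurable_snd]
    set ρ : X × X → ℝ≥0∞ := fun p => min (g p.1 * Zi) (g p.2 * Z'i) with hρdef
    have hρm : Measurable ρ := (hg1m.mul_const _).min (hg2m.mul_const _)
    set γ₁ := γ.withDensity ρ with hγ₁def
    -- marginal domination
    have hmf : γ₁.map Prod.fst ≤ F := by
      refine Measure.le_iff.mpr fun s hs => ?_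
      rw [Measure.map_apply measurable_fst hs, hγ₁def,
        withDensity_apply ρ (hs.preimage measurable_fst)]
      have h1 : ∫⁻ p in Prod.fst ⁻¹' s, ρ p ∂γ ≤ ∫⁻ p in Prod.fst ⁻¹' s, g p.1 * Zi ∂γ :=
        lintegral_mono fun p => min_le_left _ _
      refine le_trans h1 (le_of_eq ?_)
      rw [lintegral_mul_const _ hg1m]
      have h2 : ∫⁻ p : X × X in Prod.fst ⁻¹' s, g p.1 ∂γ = ∫⁻ x in s, g x ∂μ := by
        rw [← hγf, setLIntegral_map hs hgm measurable_fst]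
      rw [h2, hFdef, Measure.smul_apply, smul_eq_mul, withDensity_apply g hs, mul_comm]
    have hms : γ₁.map Prod.snd ≤ F' := by
      refine Measure.le_iff.mpr fun s hs => ?_
      rw [Measure.map_apply measurable_snd hs, hγ₁def,
        withDensity_apply ρ (hs.preimage measurable_snd)]
      have h1 : ∫⁻ p in Prod.snd ⁻¹' s, ρ p ∂γ ≤ ∫⁻ p in Prod.snd ⁻¹' s, g p.2 * Z'i ∂γ :=
        lintegral_mono fun p => min_le_right _ _
      refine le_trans h1 (le_of_eq ?_)
      rw [lintegral_mul_const _ hg2m]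
      have h2 : ∫⁻ p : X × X in Prod.snd ⁻¹' s, g p.2 ∂γ = ∫⁻ x in s, g x ∂μ' := by
        rw [← hγs, setLIntegral_map hs hgm measurable_snd]
      rw [h2, hF'def, Measure.smul_apply, smul_eq_mul, withDensity_apply g hs, mul_comm]
    set m := γ₁ Set.univ with hmdef
    have hmfuniv : (γ₁.map Prod.fst) Set.univ = m := by
      rw [Measure.map_apply measurable_fst MeasurableSet.univ, Set.preimage_univ]
    have hmsuniv : (γ₁.map Prod.snd) Set.univ = m := by
      rw [Measure.map_apply measurable_snd MeasurableSet.univ, Set.preimage_univ]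
    have hm1 : m ≤ 1 := by
      calc m = (γ₁.map Prod.fst) Set.univ := hmfuniv.symm
        _ ≤ F Set.univ := Measure.le_iff'.mp hmf Set.univ
        _ = 1 := hFuniv
    haveI : IsFiniteMeasure (γ₁.map Prod.fst) :=
      ⟨by rw [hmfuniv]; exact lt_of_le_of_lt hm1 ENNReal.one_lt_top⟩
    haveI : IsFiniteMeasure (γ₁.map Prod.snd) :=
      ⟨by rw [hmsuniv]; exact lt_of_le_of_lt hm1 ENNReal.one_lt_top⟩
    have h1mtop : 1 - m ≠ ⊤ := (lt_of_le_of_lt tsub_le_self ENNReal.one_lt_top).ne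
    set α := F - γ₁.map Prod.fst with hαdef
    set β := F' - γ₁.map Prod.snd with hβdef
    have hαuniv : α Set.univ = 1 - m := by
      rw [hαdef, Measure.sub_apply MeasurableSet.univ hmf, hFuniv, hmfuniv]
    have hβuniv : β Set.univ = 1 - m := by
      rw [hβdef, Measure.sub_apply MeasurableSet.univ hms, hF'univ, hmsuniv]
    haveI : IsFiniteMeasure α :=
      ⟨by rw [hαuniv]; exact lt_of_le_of_lt tsub_le_self ENNReal.one_lt_top⟩
    haveI : IsFiniteMeasure β :=
      ⟨by rw [hβuniv]; exact lt_of_le_of_lt tsub_le_self ENNReal.one_lt_top⟩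
    set c := (1 - m)⁻¹ with hcdef
    have hc1 : c * (1 - m) ≤ 1 := by
      by_cases hm : 1 - m = 0
      · simp [hm]
      · rw [hcdef, ENNReal.inv_mul_cancel hm h1mtop]
    have hsmul : ∀ ν : Measure X, ν Set.univ = 1 - m → (c * (1 - m)) • ν = ν := by
      intro ν hν
      by_cases hm : 1 - m = 0
      · have hν0 : ν = 0 := Measure.measure_univ_eq_zero.mp (by rw [hν, hm])
        simp [hν0]
      · rw [hcdef, ENNReal.inv_mul_cancel hm h1mtop, one_smul]
    set γ₂ := c • (α.prod β) with hγ₂def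
    set γt := γ₁ + γ₂ with hγtdef
    have hγtf : γt.map Prod.fst = F := by
      rw [hγtdef, Measure.map_add _ _ measurable_fst, hγ₂def, Measure.map_smul,
        Measure.map_fst_prod, hβuniv, smul_smul, hsmul α hαuniv, add_comm,
        hαdef, Measure.sub_add_cancel_of_le hmf]
    have hγts : γt.map Prod.snd = F' := by
      rw [hγtdef, Measure.map_add _ _ measurable_snd, hγ₂def, Measure.map_smul,
        Measure.map_snd_prod, hαuniv, smul_smul, hsmul β hβuniv, add_comm,
        hβdef, Measure.sub_add_cancel_of_le hms]
    -- cost of γ₁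
    have hB1 : ∫⁻ p : X × X, edist p.1 p.2 ∂γ₁ ≤ ENNReal.ofReal C * Zi * cost := by
      rw [hγ₁def, lintegral_withDensity_eq_lintegral_mul γ hρm hedm]
      calc ∫⁻ p : X × X, (ρ * fun q : X × X => edist q.1 q.2) p ∂γ
          ≤ ∫⁻ p : X × X, (ENNReal.ofReal C * Zi) * edist p.1 p.2 ∂γ := by
            refine lintegral_mono fun p => ?_
            simp only [Pi.mul_apply]
            refine mul_le_mul_left (le_trans (min_le_left _ _) ?_) _
            exact mul_le_mul_left (ENNReal.ofReal_le_ofReal (hC _)) Zi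
        _ = ENNReal.ofReal C * Zi * cost := lintegral_const_mul _ hedm
    -- cost of γ₂
    have hprodu : (α.prod β) Set.univ = (1 - m) * (1 - m) := by
      rw [← Set.univ_prod_univ, Measure.prod_prod, hαuniv, hβuniv]
    have hB2 : ∫⁻ p : X × X, edist p.1 p.2 ∂γ₂ ≤ ENNReal.ofReal D * (1 - m) := by
      rw [hγ₂def, lintegral_smul_measure]
      have h1 : ∫⁻ p : X × X, edist p.1 p.2 ∂(α.prod β)
          ≤ ENNReal.ofReal D * ((1 - m) * (1 - m)) := by
        calc ∫⁻ p : X × X, edist p.1 p.2 ∂(α.prod β)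
            ≤ ∫⁻ _p : X × X, ENNReal.ofReal D ∂(α.prod β) :=
              lintegral_mono fun p => by
                rw [edist_dist]; exact ENNReal.ofReal_le_ofReal (hD _ _)
          _ = ENNReal.ofReal D * ((1 - m) * (1 - m)) := by
              rw [lintegral_const, hprodu]
      calc c * ∫⁻ p : X × X, edist p.1 p.2 ∂(α.prod β)
          ≤ c * (ENNReal.ofReal D * ((1 - m) * (1 - m))) := mul_le_mul_right h1 c
        _ = (c * (1 - m)) * (ENNReal.ofReal D * (1 - m)) := by ring
        _ ≤ 1 * (ENNReal.ofReal D * (1 - m)) := mul_le_mul_left hc1 _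
        _ = ENNReal.ofReal D * (1 - m) := one_mul _
    -- bound on 1 - m
    have hmρ : m = ∫⁻ p, ρ p ∂γ := by
      rw [hmdef, hγ₁def, withDensity_apply ρ MeasurableSet.univ, setLIntegral_univ]
    have haint : ∫⁻ p : X × X, g p.1 * Zi ∂γ = 1 := by
      rw [lintegral_mul_const _ hg1m, hlf g hgm, hZeint, hZidef,
        ENNReal.mul_inv_cancel hZe0 hZetop]
    have hρfin : ∫⁻ p, ρ p ∂γ ≠ ⊤ := by
      refine ne_top_of_le_ne_top ENNReal.one_ne_top ?_
      rw [← haint]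
      exact lintegral_mono fun p => min_le_left _ _
    have h1msub : 1 - m = ∫⁻ p : X × X, (g p.1 * Zi - ρ p) ∂γ := by
      rw [lintegral_sub hρm hρfin (ae_of_all _ fun p => min_le_left _ _), haint, hmρ]
    have hptmin : ∀ p : X × X, g p.1 * Zi - ρ p = g p.1 * Zi - g p.2 * Z'i := by
      intro p
      simp only [hρdef]
      rcases le_total (g p.1 * Zi) (g p.2 * Z'i) with hle | hle
      · rw [min_eq_left hle, tsub_self]
        exact (tsub_eq_zero_of_le hle).symm
      · rw [min_eq_right hle]
    have hsplit : ∀ p : X × X, g p.1 * Zi - g p.2 * Z'i ≤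
        (ENNReal.ofReal L * Zi) * edist p.1 p.2 + g p.2 * (Zi - Z'i) := by
      intro p
      calc g p.1 * Zi - g p.2 * Z'i
          ≤ (g p.1 * Zi - g p.2 * Zi) + (g p.2 * Zi - g p.2 * Z'i) := tsub_le_tsub_add_tsub
        _ ≤ _ := by
            refine add_le_add ?_ (le_of_eq (ENNReal.mul_sub fun _ _ => hgtop p.2).symm)
            calc g p.1 * Zi - g p.2 * Zi = (g p.1 - g p.2) * Zi :=
                (ENNReal.sub_mul fun _ _ => hZitop).symm
              _ ≤ (ENNReal.ofReal L * edist p.1 p.2) * Zi :=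
                mul_le_mul_left (hlip p.1 p.2) Zi
              _ = (ENNReal.ofReal L * Zi) * edist p.1 p.2 := mul_right_comm _ _ _
    have hsum : 1 - m ≤ (ENNReal.ofReal L * Zi) * cost + Z'e * (Zi - Z'i) := by
      rw [h1msub]
      calc ∫⁻ p : X × X, (g p.1 * Zi - ρ p) ∂γ
          = ∫⁻ p : X × X, (g p.1 * Zi - g p.2 * Z'i) ∂γ := lintegral_congr hptmin
        _ ≤ ∫⁻ p : X × X, ((ENNReal.ofReal L * Zi) * edist p.1 p.2 + g p.2 * (Zi - Z'i)) ∂γ :=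
            lintegral_mono hsplit
        _ = (ENNReal.ofReal L * Zi) * cost + Z'e * (Zi - Z'i) := by
            rw [lintegral_add_left (hedm.const_mul _), lintegral_const_mul _ hedm,
              lintegral_mul_const _ hg2m, hls g hgm, hZ'eint]
    have hscalar : Z'e * (Zi - Z'i) ≤ Zi * (Z'e - Ze) := by
      rcases le_or_gt Z Z' with hzz | hzz
      · refine le_of_eq ?_
        rw [hZiofReal, hZ'iofReal, hZedef, hZ'edef,
          ← ENNReal.ofReal_sub _ (inv_nonneg.mpr hZ'pos.le),
          ← ENNReal.ofReal_mul hZ'pos.le,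
          ← ENNReal.ofReal_sub _ hZpos.le,
          ← ENNReal.ofReal_mul (inv_nonneg.mpr hZpos.le)]
        congr 1
        field_simp
      · have hle : Zi ≤ Z'i := by
          rw [hZidef, hZ'idef]
          exact ENNReal.inv_le_inv.mpr (ENNReal.ofReal_le_ofReal hzz.le)
        rw [tsub_eq_zero_of_le hle, mul_zero]
        exact zero_le
    have hZZ : Z'e - Ze ≤ ENNReal.ofReal L * cost := by
      calc Z'e - Ze = ∫⁻ p : X × X, g p.2 ∂γ - ∫⁻ p : X × X, g p.1 ∂γ := by
            rw [hls g hgm, hZ'eint, hlf g hgm, hZeint]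
        _ ≤ ∫⁻ p : X × X, (g p.2 - g p.1) ∂γ := lintegral_sub_le _ _ hg1m
        _ ≤ ∫⁻ p : X × X, ENNReal.ofReal L * edist p.1 p.2 ∂γ := by
            refine lintegral_mono fun p => ?_
            have := hlip p.2 p.1
            rwa [edist_comm] at this
        _ = ENNReal.ofReal L * cost := lintegral_const_mul _ hedm
    have hB3 : 1 - m ≤ 2 * (ENNReal.ofReal L * Zi) * cost := by
      calc 1 - m ≤ (ENNReal.ofReal L * Zi) * cost + Z'e * (Zi - Z'i) := hsum
        _ ≤ (ENNReal.ofReal L * Zi) * cost + Zi * (ENNReal.ofReal L * cost) :=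
            add_le_add_right (hscalar.trans (mul_le_mul_right hZZ Zi)) _
        _ = 2 * (ENNReal.ofReal L * Zi) * cost := by ring
    -- assemble
    calc W1 F F' ≤ ∫⁻ p : X × X, edist p.1 p.2 ∂γt := iInf₂_le γt ⟨hγtf, hγts⟩
      _ = ∫⁻ p : X × X, edist p.1 p.2 ∂γ₁ + ∫⁻ p : X × X, edist p.1 p.2 ∂γ₂ :=
          lintegral_add_measure _ _ _
      _ ≤ ENNReal.ofReal C * Zi * cost + ENNReal.ofReal D * (1 - m) := add_le_add hB1 hB2
      _ ≤ ENNReal.ofReal C * Zi * cost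
          + ENNReal.ofReal D * (2 * (ENNReal.ofReal L * Zi) * cost) :=
          add_le_add_right (mul_le_mul_right hB3 _) _
      _ = (ENNReal.ofReal C * Zi + ENNReal.ofReal D * (2 * (ENNReal.ofReal L * Zi))) * cost := by
          ring
      _ = K * cost := by rw [hKeq]
  -- conclude
  have hdiv : ∀ γ ∈ {γ : Measure (X × X) | γ.map Prod.fst = μ ∧ γ.map Prod.snd = μ'},
      W1 F F' / K ≤ ∫⁻ p, edist p.1 p.2 ∂γ := by
    intro γ hγ
    rw [ENNReal.div_le_iff hK0 hKtop]
    calc W1 F F' ≤ K * ∫⁻ p, edist p.1 p.2 ∂γ := key γ hγ.1 hγ.2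
      _ = (∫⁻ p, edist p.1 p.2 ∂γ) * K := mul_comm _ _
  have hlow : W1 F F' / K ≤ W1 μ μ' := le_iInf₂ hdiv
  calc W1 F F' = W1 F F' / K * K := (ENNReal.div_mul_cancel hK0 hKtop).symm
    _ ≤ W1 μ μ' * K := mul_le_mul_left hlow K
    _ = K * W1 μ μ' := mul_comm _ _
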